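/- Let C ∈ ℝ^{K×R} with k_C = K ≤ R, set m = R − K + 2, and let l ≥ 0. Then rank( S_{m+l}(C) ) ≥ C(R+l+1, m+l) − C(R, m−1). -/

import Mathlib

open scoped BigOperators
open Matrix

namespace CPD


/-- `T = [A,B,C]_R` : a polyadic decomposition of the `I × J × K` tensor `T`. -/
def IsPD {I J K R : ℕ} (T : Fin I → Fin J → Fin K → ℝ)
    (A : Matrix (Fin I) (Fin R) ℝ) (B : Matrix (Fin J) (Fin R) ℝ)
    (C : Matrix (Fin K) (Fin R) ℝ) : Prop :=
  ∀ i j k, T i j k = ∑ r : Fin R, A i r * B j r * C k r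

/-- The tensor rank: the minimal `R` admitting a polyadic decomposition. -/
noncomputable def tensorRank {I J K : ℕ} (T : Fin I → Fin J → Fin K → ℝ) : ℕ :=
  sInf {R : ℕ | ∃ (A : Matrix (Fin I) (Fin R) ℝ) (B : Matrix (Fin J) (Fin R) ℝ)
      (C : Matrix (Fin K) (Fin R) ℝ), IsPD T A B C}

/-- Uniqueness of the CPD `T = [A,B,C]_R`: every rank-`R` polyadic decomposition
consists of the same rank-1 terms up to permutation. -/
def CPDUnique {I J K R : ℕ} (T : Fin I → Fin J → Fin K → ℝ)
    (A : Matrix (Fin I) (Fin R) ℝ) (B : Matrix (Fin J) (Fin R) ℝ)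
    (C : Matrix (Fin K) (Fin R) ℝ) : Prop :=
  ∀ (A' : Matrix (Fin I) (Fin R) ℝ) (B' : Matrix (Fin J) (Fin R) ℝ)
    (C' : Matrix (Fin K) (Fin R) ℝ), IsPD T A' B' C' →
    ∃ π : Equiv.Perm (Fin R), ∀ (r : Fin R) (i : Fin I) (j : Fin J) (k : Fin K),
      A' i r * B' j r * C' k r = A i (π r) * B j (π r) * C k (π r)

/-- Uniqueness of the third factor matrix of `T`. -/
def ThirdFactorUnique {I J K R : ℕ} (T : Fin I → Fin J → Fin K → ℝ)
    (C : Matrix (Fin K) (Fin R) ℝ) : Prop :=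
  ∀ (A' : Matrix (Fin I) (Fin R) ℝ) (B' : Matrix (Fin J) (Fin R) ℝ)
    (C' : Matrix (Fin K) (Fin R) ℝ), IsPD T A' B' C' →
    ∃ (π : Equiv.Perm (Fin R)) (lam : Fin R → ℝ),
      (∀ r, lam r ≠ 0) ∧ ∀ (k : Fin K) (r : Fin R), C' k r = lam r * C k (π r)

/-- The k-rank of a matrix: the largest `k` such that every `k` columns are
linearly independent. -/
noncomputable def kRank {n R : ℕ} (M : Matrix (Fin n) (Fin R) ℝ) : ℕ :=
  sSup {k : ℕ | k ≤ R ∧ ∀ s : Finset (Fin R), s.card = k →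
    LinearIndependent ℝ (fun r : {x // x ∈ s} => Mᵀ (r : Fin R))}

/-- A matrix has full column rank iff its columns are linearly independent. -/
def FullColRank {α : Type*} {n : ℕ} (M : Matrix α (Fin n) ℝ) : Prop :=
  LinearIndependent ℝ (fun r : Fin n => Mᵀ r)

/-- Khatri–Rao product `A ⊙ B`, with columns `aᵣ ⊗ bᵣ`. -/
def khatriRao {I J R : ℕ} (A : Matrix (Fin I) (Fin R) ℝ) (B : Matrix (Fin J) (Fin R) ℝ) :
    Matrix (Fin I × Fin J) (Fin R) ℝ :=
  fun ij r => A ij.1 r * B ij.2 r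

/-- `n`-fold Khatri–Rao power `F^{(n)} = F ⊙ ⋯ ⊙ F`. -/
def krPow {K N : ℕ} (F : Matrix (Fin K) (Fin N) ℝ) (n : ℕ) :
    Matrix (Fin n → Fin K) (Fin N) ℝ :=
  fun k c => ∏ p : Fin n, F (k p) c

/-- The matrix `R_{m,l}(T)`. -/
noncomputable def Rml {I J K : ℕ} (m l : ℕ) (T : Fin I → Fin J → Fin K → ℝ) :
    Matrix ((Fin (m + l) → Fin I) × (Fin (m + l) → Fin J)) (Fin (m + l) → Fin K) ℝ :=
  fun ij k =>
    (1 / (Nat.factorial m * Nat.factorial (m + l) : ℝ)) *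
      ∑ σ : Equiv.Perm (Fin (m + l)),
        Matrix.det (Matrix.of fun p q : Fin m =>
            T (ij.1 (Fin.castAdd l p)) (ij.2 (Fin.castAdd l q)) (k (σ (Fin.castAdd l q)))) *
        ∏ u : Fin l,
          T (ij.1 (Fin.natAdd m u)) (ij.2 (Fin.natAdd m u)) (k (σ (Fin.natAdd m u)))

/-- Nondecreasing `(m+l)`-tuples with values in `{1,…,R}` taking at least `m`
distinct values: the column index set of `Φ_{m,l}` and `S_{m+l}`. -/
def IsTupleIdx (m : ℕ) {n R : ℕ} (r : Fin n → Fin R) : Prop :=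
  (∀ a b : Fin n, a ≤ b → r a ≤ r b) ∧ m ≤ (Finset.image r Finset.univ).card

instance (m : ℕ) {n R : ℕ} : DecidablePred (IsTupleIdx m (n := n) (R := R)) := fun _r =>
  instDecidableAnd

/-- Column index type for `Φ_{m,l}` and `S_{m+l}`. -/
abbrev TupleIdx (m l R : ℕ) := {r : Fin (m + l) → Fin R // IsTupleIdx m r}

/-- The matrix `Φ_{m,l}(A,B)`. -/
noncomputable def Phi {I J R : ℕ} (m l : ℕ) (A : Matrix (Fin I) (Fin R) ℝ)
    (B : Matrix (Fin J) (Fin R) ℝ) :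
    Matrix ((Fin (m + l) → Fin I) × (Fin (m + l) → Fin J)) (TupleIdx m l R) ℝ :=
  fun ij r =>
    (1 / (Nat.factorial m : ℝ) ^ 2) *
      ∑ σ : Equiv.Perm (Fin (m + l)),
        Matrix.det (Matrix.of fun p q : Fin m =>
            A (ij.1 (Fin.castAdd l p)) (r.1 (σ (Fin.castAdd l q)))) *
        Matrix.det (Matrix.of fun p q : Fin m =>
            B (ij.2 (Fin.castAdd l p)) (r.1 (σ (Fin.castAdd l q)))) *
        ∏ u : Fin l,
          A (ij.1 (Fin.natAdd m u)) (r.1 (σ (Fin.natAdd m u))) *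
          B (ij.2 (Fin.natAdd m u)) (r.1 (σ (Fin.natAdd m u)))

/-- The matrix `S_{m+l}(C)`. -/
noncomputable def Sml {K R : ℕ} (m l : ℕ) (C : Matrix (Fin K) (Fin R) ℝ) :
    Matrix (Fin (m + l) → Fin K) (TupleIdx m l R) ℝ :=
  fun k r =>
    (1 / (Nat.factorial (m + l) : ℝ)) *
      ∑ σ : Equiv.Perm (Fin (m + l)), ∏ p : Fin (m + l), C (k p) (r.1 (σ p))

/-- `S^n(ℝ^{K^n})`: span of the vectors `x ⊗ ⋯ ⊗ x` (vectorized symmetric tensors). -/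
def symSpan (K n : ℕ) : Submodule ℝ ((Fin n → Fin K) → ℝ) :=
  Submodule.span ℝ {v | ∃ x : Fin K → ℝ, v = fun k => ∏ p : Fin n, x (k p)}

/-- `F` satisfies (P1)–(P2) with respect to `C`. -/
def SatisfiesP1P2 {K R N : ℕ} (C : Matrix (Fin K) (Fin R) ℝ)
    (F : Matrix (Fin K) (Fin N) ℝ) : Prop :=
  (∀ c : Fin N, Nat.card {r : Fin R // ∑ k, F k c * C k r = 0} = K - 1) ∧
  (∀ x : Fin K → ℝ, Nat.card {r : Fin R // ∑ k, x k * C k r = 0} = K - 1 →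
    ∃ (c : Fin N) (t : ℝ), x = t • fun k => F k c)

/-- Condition (W_m) for the triplet `(A, B, C)`. -/
def CondW {I J K R : ℕ} (m : ℕ) (A : Matrix (Fin I) (Fin R) ℝ)
    (B : Matrix (Fin J) (Fin R) ℝ) (C : Matrix (Fin K) (Fin R) ℝ) : Prop :=
  ∀ lam : Fin R → ℝ, (∃ x : Fin K → ℝ, lam = Cᵀ.mulVec x) →
    (A * Matrix.diagonal lam * Bᵀ).rank ≤ m - 1 →
    Nat.card {r : Fin R // lam r ≠ 0} ≤ m - 1



section Aux

variable {K R : ℕ} (C : Matrix (Fin K) (Fin R) ℝ)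

/-- linear form attached to a vector -/
def lform (v : Fin K → ℝ) : (Fin K → ℝ) → ℝ := fun x => ∑ j, x j * v j

/-- linear form attached to column `q` of `C` -/
def ell (q : Fin R) : (Fin K → ℝ) → ℝ := lform (Cᵀ q)

/-- product of the linear forms of the columns listed by `t` -/
def ftup {n : ℕ} (t : Fin n → Fin R) : (Fin K → ℝ) → ℝ := fun x => ∏ p, ell C (t p) x

/-- multiplicity of `r` in the tuple `t` -/
def cnt {n : ℕ} (t : Fin n → Fin R) (r : Fin R) : ℕ :=
  (Finset.univ.filter fun p => t p = r).card

variable {C}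

lemma ftup_comp_equiv {n : ℕ} (t : Fin n → Fin R) (e : Equiv.Perm (Fin n)) :
    ftup C (t ∘ e) = ftup C t := by
  funext x
  exact Equiv.prod_comp e (fun p => ell C (t p) x)

lemma image_comp_equiv {n : ℕ} (t : Fin n → Fin R) (e : Equiv.Perm (Fin n)) :
    Finset.image (t ∘ e) Finset.univ = Finset.image t Finset.univ := by
  ext r
  simp only [Finset.mem_image, Finset.mem_univ, true_and, Function.comp_apply]
  constructor
  · rintro ⟨p, hp⟩; exact ⟨e p, hp⟩
  · rintro ⟨p, hp⟩; exact ⟨e.symm p, by simpa using hp⟩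

lemma sum_cnt {n : ℕ} (t : Fin n → Fin R) : ∑ r, cnt t r = n := by
  classical
  unfold cnt
  simp only [Finset.card_filter]
  rw [Finset.sum_comm]
  simp

lemma mem_image_iff_cnt_pos {n : ℕ} (t : Fin n → Fin R) (r : Fin R) :
    r ∈ Finset.image t Finset.univ ↔ 0 < cnt t r := by
  classical
  unfold cnt
  rw [Finset.card_pos]
  constructor
  · intro h
    rw [Finset.mem_image] at h
    obtain ⟨p, _, hp⟩ := h
    exact ⟨p, by simp [hp]⟩
  · rintro ⟨p, hp⟩
    simp only [Finset.mem_filter, Finset.mem_univ, true_and] at hp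
    exact Finset.mem_image.2 ⟨p, Finset.mem_univ _, hp⟩

lemma cnt_update_add {n : ℕ} (t : Fin n → Fin R) (p1 : Fin n) (q v : Fin R) :
    cnt (Function.update t p1 q) v + (if t p1 = v then 1 else 0)
      = cnt t v + (if q = v then 1 else 0) := by
  classical
  unfold cnt
  rw [Finset.card_filter, Finset.card_filter]
  rw [← Finset.sum_erase_add _ _ (Finset.mem_univ p1),
      ← Finset.sum_erase_add _ _ (Finset.mem_univ p1)]
  have h1 : ∀ p ∈ Finset.univ.erase p1,
      (if Function.update t p1 q p = v then 1 else 0) = (if t p = v then 1 else 0) := by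
    intro p hp
    rw [Function.update_of_ne (Finset.ne_of_mem_erase hp)]
  rw [Finset.sum_congr rfl h1, Function.update_self]
  ring

lemma ftup_eq_prod_pow {n : ℕ} (t : Fin n → Fin R) :
    ftup C t = fun x => ∏ r, ell C r x ^ cnt t r := by
  classical
  funext x
  rw [ftup]
  rw [← Finset.prod_fiberwise' Finset.univ t (fun r => ell C r x)]
  exact Finset.prod_congr rfl fun r _ => by rw [Finset.prod_const, cnt]

lemma ftup_eq_of_cnt_eq {n : ℕ} {t t' : Fin n → Fin R} (h : ∀ r, cnt t r = cnt t' r) :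
    ftup C t = ftup C t' := by
  rw [ftup_eq_prod_pow, ftup_eq_prod_pow]
  funext x
  exact Finset.prod_congr rfl fun r _ => by rw [h r]

lemma exists_two_positions {n : ℕ} {t : Fin n → Fin R} {r : Fin R} (h : 2 ≤ cnt t r) :
    ∃ p1 p2 : Fin n, p1 ≠ p2 ∧ t p1 = r ∧ t p2 = r := by
  classical
  rw [cnt] at h
  obtain ⟨p1, hp1, p2, hp2, hne⟩ := Finset.one_lt_card.1 h
  simp only [Finset.mem_filter, Finset.mem_univ, true_and] at hp1 hp2
  exact ⟨p1, p2, hne, hp1, hp2⟩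

/-- the fundamental expansion of a product of linear forms when one factor is
rewritten as a linear combination -/
lemma ftup_expand {n : ℕ} (t : Fin n → Fin R) (p1 : Fin n) {ι : Type*} [Fintype ι]
    (β : ι → ℝ) (q : ι → Fin R)
    (h : ∀ x, ell C (t p1) x = ∑ i, β i * ell C (q i) x) :
    ftup C t = ∑ i, β i • ftup C (Function.update t p1 (q i)) := by
  classical
  funext x
  rw [Finset.sum_apply]
  have hprod : ∀ i, ftup C (Function.update t p1 (q i)) x
      = ell C (q i) x * ∏ p ∈ Finset.univ.erase p1, ell C (t p) x := by
    intro i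
    rw [ftup, ← Finset.prod_erase_mul _ _ (Finset.mem_univ p1), Function.update_self, mul_comm]
    congr 1
    exact Finset.prod_congr rfl fun p hp => by
      rw [Function.update_of_ne (Finset.ne_of_mem_erase hp)]
  rw [ftup, ← Finset.prod_erase_mul _ _ (Finset.mem_univ p1), h x, Finset.mul_sum]
  refine Finset.sum_congr rfl fun i _ => ?_
  rw [Pi.smul_apply, hprod i, smul_eq_mul]
  ring

lemma lform_sum {ι : Type*} [Fintype ι] (β : ι → ℝ) (w : ι → (Fin K → ℝ)) (x : Fin K → ℝ) :
    lform (∑ i, β i • w i) x = ∑ i, β i * lform (w i) x := by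
  unfold lform
  simp only [Finset.sum_apply, Pi.smul_apply, smul_eq_mul, Finset.mul_sum]
  rw [Finset.sum_comm]
  exact Finset.sum_congr rfl fun i _ => Finset.sum_congr rfl fun j _ => by ring

lemma kRank_spec (hkC : kRank C = K) :
    ∀ s : Finset (Fin R), s.card = K →
      LinearIndependent ℝ (fun r : {x // x ∈ s} => Cᵀ (r : Fin R)) := by
  classical
  have hmem : kRank C ∈ {k : ℕ | k ≤ R ∧ ∀ s : Finset (Fin R), s.card = k →
      LinearIndependent ℝ (fun r : {x // x ∈ s} => Cᵀ (r : Fin R))} := by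
    rw [kRank]
    apply Nat.sSup_mem
    · refine ⟨0, ⟨Nat.zero_le R, fun s hs => ?_⟩⟩
      have : IsEmpty {x // x ∈ s} := by
        rw [Finset.card_eq_zero] at hs; subst hs
        exact ⟨fun x => absurd x.2 (Finset.notMem_empty _)⟩
      exact linearIndependent_empty_type
    · exact ⟨R, fun k hk => hk.1⟩
  rw [hkC] at hmem
  exact fun s hs => hmem.2 s hs

lemma exists_combo (hkC : kRank C = K) (T : Finset (Fin R)) (hT : T.card = K)
    (v : Fin K → ℝ) : ∃ β : {x // x ∈ T} → ℝ, v = ∑ i, β i • Cᵀ (i : Fin R) := by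
  classical
  have li := kRank_spec hkC T hT
  have hcard : Fintype.card {x // x ∈ T} = Module.finrank ℝ (Fin K → ℝ) := by
    rw [Fintype.card_coe, hT, Module.finrank_fin_fun]
  have hsp := li.span_eq_top_of_card_eq_finrank' hcard
  have hv : v ∈ Submodule.span ℝ (Set.range fun r : {x // x ∈ T} => Cᵀ (r : Fin R)) := by
    rw [hsp]; trivial
  obtain ⟨c, hc⟩ := (Submodule.mem_span_range_iff_exists_fun ℝ).1 hv
  exact ⟨c, hc.symm⟩

/-- rewriting one linear form `ell` as a combination of others, from a vector identity -/
lemma ell_combo {v : Fin K → ℝ} {ι : Type*} [Fintype ι] {β : ι → ℝ} {w : ι → Fin R}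
    (h : v = ∑ i, β i • Cᵀ (w i)) (x : Fin K → ℝ) :
    lform v x = ∑ i, β i * ell C (w i) x := by
  rw [h, lform_sum]
  rfl

lemma cnt_pos_of_image {n : ℕ} {t : Fin n → Fin R} {S : Finset (Fin R)}
    (himg : Finset.image t Finset.univ = S) {r : Fin R} (hr : r ∈ S) : 0 < cnt t r :=
  (mem_image_iff_cnt_pos t r).1 (himg ▸ hr)

lemma cnt_eq_zero_of_not_mem {n : ℕ} {t : Fin n → Fin R} {S : Finset (Fin R)}
    (himg : Finset.image t Finset.univ = S) {r : Fin R} (hr : r ∉ S) : cnt t r = 0 := by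
  by_contra h
  exact hr (himg ▸ (mem_image_iff_cnt_pos t r).2 (Nat.pos_of_ne_zero h))

lemma sum_cnt_over {n : ℕ} {t : Fin n → Fin R} {S : Finset (Fin R)}
    (himg : Finset.image t Finset.univ = S) : ∑ r ∈ S, cnt t r = n := by
  classical
  have h1 : ∑ r ∈ S, cnt t r = ∑ r, cnt t r := by
    apply Finset.sum_subset (Finset.subset_univ _)
    intro r _ hr
    exact cnt_eq_zero_of_not_mem himg hr
  rw [h1, sum_cnt]

lemma all_one_of_sum_card {s : Finset (Fin R)} {f : Fin R → ℕ}
    (h1 : ∀ i ∈ s, 1 ≤ f i) (h : ∑ i ∈ s, f i = s.card) : ∀ i ∈ s, f i = 1 := by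
  by_contra hc
  push_neg at hc
  obtain ⟨i, hi, hne⟩ := hc
  have hlt : ∑ x ∈ s, (fun _ => 1) x < ∑ x ∈ s, f x :=
    Finset.sum_lt_sum h1 ⟨i, hi, by have := h1 i hi; omega⟩
  simp only [Finset.sum_const, smul_eq_mul, mul_one] at hlt
  omega

lemma exists_two_of_card_lt_sum {s : Finset (Fin R)} {f : Fin R → ℕ}
    (h : s.card < ∑ i ∈ s, f i) : ∃ i ∈ s, 2 ≤ f i := by
  by_contra hc
  push_neg at hc
  have := Finset.sum_le_card_nsmul s f 1 (fun i hi => by have := hc i hi; omega)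
  simp only [smul_eq_mul, mul_one] at this
  exact absurd h (Nat.not_lt.2 (by simpa using this))

lemma image_update_eq {n : ℕ} {t : Fin n → Fin R} {p1 : Fin n} {q : Fin R}
    (h2 : 2 ≤ cnt t (t p1)) :
    Finset.image (Function.update t p1 q) Finset.univ
      = insert q (Finset.image t Finset.univ) := by
  classical
  ext v
  rw [mem_image_iff_cnt_pos, Finset.mem_insert, mem_image_iff_cnt_pos]
  have h := cnt_update_add t p1 q v
  by_cases hqv : q = v
  · subst hqv
    rw [if_pos rfl] at h
    by_cases hpv : t p1 = q
    · rw [if_pos hpv] at h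
      rw [hpv] at h2
      exact ⟨fun _ => Or.inl rfl, fun _ => by omega⟩
    · rw [if_neg hpv] at h
      exact ⟨fun _ => Or.inl rfl, fun _ => by omega⟩
  · rw [if_neg hqv] at h
    by_cases hpv : t p1 = v
    · rw [if_pos hpv] at h
      have h2' : 2 ≤ cnt t v := hpv ▸ h2
      exact ⟨fun _ => Or.inr (by omega), fun _ => by omega⟩
    · rw [if_neg hpv] at h
      refine ⟨fun hpos => Or.inr (by omega), ?_⟩
      rintro (rfl | hpos)
      · exact absurd rfl hqv
      · omega

lemma cnt_update_self {n : ℕ} {t : Fin n → Fin R} {p1 : Fin n} {q : Fin R}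
    (hpq : t p1 ≠ q) : cnt (Function.update t p1 q) q = cnt t q + 1 := by
  have h := cnt_update_add t p1 q q
  rw [if_neg hpq, if_pos rfl] at h
  omega

lemma cnt_update_other {n : ℕ} {t : Fin n → Fin R} {p1 : Fin n} {q v : Fin R}
    (h1 : t p1 ≠ v) (h2 : q ≠ v) : cnt (Function.update t p1 q) v = cnt t v := by
  have h := cnt_update_add t p1 q v
  rw [if_neg h1, if_neg h2] at h
  omega

/-- canonical first element of a nonempty finset -/
noncomputable def headEl (S : Finset (Fin R)) (h : 0 < S.card) : Fin R :=
  ((S.orderIsoOfFin rfl) ⟨0, h⟩ : Fin R)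

lemma headEl_mem (S : Finset (Fin R)) (h : 0 < S.card) : headEl S h ∈ S :=
  ((S.orderIsoOfFin rfl) ⟨0, h⟩).2

lemma exists_canon {n : ℕ} (S : Finset (Fin R)) (h0 : 0 < S.card) (hn : S.card ≤ n) :
    ∃ t0 : Fin n → Fin R, Finset.image t0 Finset.univ = S ∧
      ∀ r ∈ S, r ≠ headEl S h0 → cnt t0 r = 1 := by
  classical
  set e := S.orderIsoOfFin rfl with he
  refine ⟨fun p => if h : (p : ℕ) < S.card then (e ⟨(p : ℕ), h⟩ : Fin R) else headEl S h0,
    ?_, ?_⟩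
  · ext v
    simp only [Finset.mem_image, Finset.mem_univ, true_and]
    constructor
    · rintro ⟨p, hp⟩
      by_cases h : (p : ℕ) < S.card
      · rw [dif_pos h] at hp; rw [← hp]; exact (e ⟨(p : ℕ), h⟩).2
      · rw [dif_neg h] at hp; rw [← hp]; exact headEl_mem S h0
    · intro hv
      obtain ⟨i, hi⟩ := e.surjective ⟨v, hv⟩
      refine ⟨⟨(i : ℕ), lt_of_lt_of_le i.2 hn⟩, ?_⟩
      rw [dif_pos i.2]
      rw [Fin.eta, hi]
  · intro r hr hne
    obtain ⟨i0, hi0⟩ := e.surjective ⟨r, hr⟩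
    rw [cnt, Finset.card_eq_one]
    refine ⟨⟨(i0 : ℕ), lt_of_lt_of_le i0.2 hn⟩, ?_⟩
    ext p
    simp only [Finset.mem_filter, Finset.mem_univ, true_and, Finset.mem_singleton]
    constructor
    · intro hp
      by_cases h : (p : ℕ) < S.card
      · rw [dif_pos h] at hp
        have h1 : e ⟨(p : ℕ), h⟩ = ⟨r, hr⟩ := Subtype.ext hp
        have h2 : (⟨(p : ℕ), h⟩ : Fin S.card) = i0 := e.injective (h1.trans hi0.symm)
        exact Fin.val_injective (congrArg (fun i : Fin S.card => (i : ℕ)) h2)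
      · rw [dif_neg h] at hp
        exact absurd hp.symm hne
    · rintro rfl
      rw [dif_pos i0.2]
      rw [Fin.eta, hi0]

noncomputable def Gspan (C : Matrix (Fin K) (Fin R) ℝ) (m l : ℕ) :
    Submodule ℝ ((Fin K → ℝ) → ℝ) :=
  Submodule.span ℝ (Set.range fun r : TupleIdx m l R => ftup C r.1)

noncomputable def xvec (C : Matrix (Fin K) (Fin R) ℝ) (m l : ℕ) (S : Finset (Fin R)) :
    (Fin K → ℝ) → ℝ :=
  if h : 0 < S.card ∧ S.card ≤ m + l then
    ftup C (Classical.choose (exists_canon S h.1 h.2)) else 0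

noncomputable def Xspan (C : Matrix (Fin K) (Fin R) ℝ) (m l : ℕ) :
    Submodule ℝ ((Fin K → ℝ) → ℝ) :=
  Submodule.span ℝ (Set.range fun S : {S : Finset (Fin R) // S.card = m - 1} =>
    xvec C m l S.1)

lemma mem_G {m l : ℕ} (t : Fin (m + l) → Fin R)
    (h : m ≤ (Finset.image t Finset.univ).card) :
    ftup C t ∈ Gspan C m l := by
  have hmono : Monotone (t ∘ Tuple.sort t) := Tuple.monotone_sort t
  have hidx : IsTupleIdx m (t ∘ Tuple.sort t) :=
    ⟨fun a b hab => hmono hab, by rw [image_comp_equiv]; exact h⟩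
  rw [← ftup_comp_equiv t (Tuple.sort t)]
  exact Submodule.subset_span ⟨⟨_, hidx⟩, rfl⟩

lemma cnt_head_of_ones {n : ℕ} {t : Fin n → Fin R} {S : Finset (Fin R)}
    (himg : Finset.image t Finset.univ = S) (h0 : 0 < S.card)
    (hones : ∀ r ∈ S, r ≠ headEl S h0 → cnt t r = 1) :
    cnt t (headEl S h0) = n - S.card + 1 := by
  classical
  have hsum := sum_cnt_over himg
  rw [← Finset.add_sum_erase _ _ (headEl_mem S h0)] at hsum
  have h1 : ∑ r ∈ S.erase (headEl S h0), cnt t r = S.card - 1 := by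
    rw [Finset.sum_congr rfl (fun r hr =>
      hones r (Finset.mem_of_mem_erase hr) (Finset.ne_of_mem_erase hr))]
    rw [Finset.sum_const, Finset.card_erase_of_mem (headEl_mem S h0)]
    simp
  rw [h1] at hsum
  have hpos := cnt_pos_of_image himg (headEl_mem S h0)
  omega

lemma memX_of_base {m l : ℕ} (hm2 : 2 ≤ m) {S : Finset (Fin R)} (h0 : 0 < S.card)
    (hcard : S.card = m - 1) {t : Fin (m + l) → Fin R}
    (himg : Finset.image t Finset.univ = S)
    (hones : ∀ r ∈ S, r ≠ headEl S h0 → cnt t r = 1) :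
    ftup C t ∈ Xspan C m l := by
  classical
  have hc : 0 < S.card ∧ S.card ≤ m + l := ⟨h0, by omega⟩
  have hspec := Classical.choose_spec (exists_canon S hc.1 hc.2)
  set t0 := Classical.choose (exists_canon S hc.1 hc.2) with ht0
  have hones0 : ∀ r ∈ S, r ≠ headEl S h0 → cnt t0 r = 1 := hspec.2
  have hcnt : ∀ r, cnt t r = cnt t0 r := by
    intro r
    by_cases hr : r ∈ S
    · by_cases hr0 : r = headEl S h0
      · subst hr0
        rw [cnt_head_of_ones himg h0 hones, cnt_head_of_ones hspec.1 h0 hones0]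
      · rw [hones r hr hr0, hones0 r hr hr0]
    · rw [cnt_eq_zero_of_not_mem himg hr, cnt_eq_zero_of_not_mem hspec.1 hr]
  rw [ftup_eq_of_cnt_eq hcnt]
  have hx : ftup C t0 = xvec C m l S := by rw [xvec, dif_pos hc]
  rw [hx]
  exact Submodule.subset_span ⟨⟨S, hcard⟩, rfl⟩

lemma memB_base {m l : ℕ} (hm2 : 2 ≤ m) {t : Fin (m + l) → Fin R} {S : Finset (Fin R)}
    (himg : Finset.image t Finset.univ = S) (h0 : 0 < S.card) (hSc : S.card = m - 1)
    (hbig : l + 2 ≤ cnt t (headEl S h0)) : ftup C t ∈ Xspan C m l := by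
  classical
  have hsum := sum_cnt_over himg
  rw [← Finset.add_sum_erase _ _ (headEl_mem S h0)] at hsum
  have hge : ∀ r ∈ S.erase (headEl S h0), 1 ≤ cnt t r := fun r hr =>
    cnt_pos_of_image himg (Finset.mem_of_mem_erase hr)
  have hecard : (S.erase (headEl S h0)).card = m - 2 := by
    rw [Finset.card_erase_of_mem (headEl_mem S h0)]; omega
  have hge2'' := Finset.card_nsmul_le_sum (S.erase (headEl S h0)) (cnt t) 1 hge
  simp only [smul_eq_mul, mul_one] at hge2''
  have hge2 : (S.erase (headEl S h0)).card ≤ ∑ r ∈ S.erase (headEl S h0), cnt t r := hge2''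
  have hsum2 : ∑ r ∈ S.erase (headEl S h0), cnt t r = (S.erase (headEl S h0)).card := by
    omega
  have hones : ∀ r ∈ S, r ≠ headEl S h0 → cnt t r = 1 := by
    intro r hr hne
    exact all_one_of_sum_card hge hsum2 r (Finset.mem_erase.2 ⟨hne, hr⟩)
  exact memX_of_base hm2 h0 hSc himg hones

lemma memB {m l : ℕ} (hkC : kRank C = K) (hKR : K ≤ R) (hK : 1 ≤ K) (hm : m = R - K + 2)
    (t : Fin (m + l) → Fin R) (hcard : (Finset.image t Finset.univ).card = m - 1) :
    ftup C t ∈ Gspan C m l ⊔ Xspan C m l := by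
  classical
  have hm2 : 2 ≤ m := by omega
  suffices H : ∀ (j : ℕ) (t : Fin (m + l) → Fin R) (S : Finset (Fin R)),
      Finset.image t Finset.univ = S → ∀ h0 : 0 < S.card, S.card = m - 1 →
      l + 2 - cnt t (headEl S h0) ≤ j → ftup C t ∈ Gspan C m l ⊔ Xspan C m l by
    exact H (l + 2) t _ rfl (by omega) hcard (by omega)
  intro j
  induction j with
  | zero =>
    intro t S himg h0 hSc hj
    exact Submodule.mem_sup_right (memB_base hm2 himg h0 hSc (by omega))
  | succ j ih =>
    intro t S himg h0 hSc hj
    by_cases hbig : l + 2 ≤ cnt t (headEl S h0)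
    · exact Submodule.mem_sup_right (memB_base hm2 himg h0 hSc hbig)
    · push_neg at hbig
      have hsum := sum_cnt_over himg
      rw [← Finset.add_sum_erase _ _ (headEl_mem S h0)] at hsum
      have hecard : (S.erase (headEl S h0)).card = m - 2 := by
        rw [Finset.card_erase_of_mem (headEl_mem S h0)]; omega
      have hlt : (S.erase (headEl S h0)).card < ∑ r ∈ S.erase (headEl S h0), cnt t r := by
        omega
      obtain ⟨r, hrE, hr2⟩ := exists_two_of_card_lt_sum hlt
      have hrS : r ∈ S := Finset.mem_of_mem_erase hrE
      have hrne : r ≠ headEl S h0 := Finset.ne_of_mem_erase hrE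
      obtain ⟨p1, p2, hp12, hp1, hp2⟩ := exists_two_positions hr2
      have hr0c : headEl S h0 ∉ Sᶜ := by
        rw [Finset.mem_compl, not_not]; exact headEl_mem S h0
      have hTcard : (insert (headEl S h0) Sᶜ).card = K := by
        rw [Finset.card_insert_of_notMem hr0c, Finset.card_compl]
        simp only [Fintype.card_fin]
        omega
      obtain ⟨β, hβ⟩ := exists_combo hkC _ hTcard (Cᵀ r)
      have hexp : ∀ x, ell C (t p1) x
          = ∑ i : {y // y ∈ insert (headEl S h0) Sᶜ}, β i * ell C (i : Fin R) x := by
        intro x; rw [hp1]; exact ell_combo hβ x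
      rw [ftup_expand t p1 β (fun i => (i : Fin R)) hexp]
      apply Submodule.sum_mem
      intro i _
      apply Submodule.smul_mem
      have h2' : 2 ≤ cnt t (t p1) := by rw [hp1]; exact hr2
      have ht' := image_update_eq (q := (i : Fin R)) h2'
      rcases Finset.mem_insert.1 i.2 with hi | hi
      · apply ih (Function.update t p1 (i : Fin R)) S ?_ h0 hSc ?_
        · rw [ht', himg, hi, Finset.insert_eq_self.2 (headEl_mem S h0)]
        · have hgrow : cnt (Function.update t p1 (i : Fin R)) (headEl S h0)
              = cnt t (headEl S h0) + 1 := by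
            rw [hi]
            exact cnt_update_self (by rw [hp1]; exact hrne)
          omega
      · apply Submodule.mem_sup_left
        apply mem_G
        rw [ht', himg, Finset.card_insert_of_notMem (Finset.mem_compl.1 hi)]
        omega

lemma memGX_all {m l : ℕ} (hkC : kRank C = K) (hKR : K ≤ R) (hK : 1 ≤ K)
    (hm : m = R - K + 2) (t : Fin (m + l) → Fin R) :
    ftup C t ∈ Gspan C m l ⊔ Xspan C m l := by
  classical
  have hm2 : 2 ≤ m := by omega
  suffices H : ∀ (j : ℕ) (t : Fin (m + l) → Fin R),
      m - (Finset.image t Finset.univ).card ≤ j →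
      ftup C t ∈ Gspan C m l ⊔ Xspan C m l by
    exact H m t (by omega)
  intro j
  induction j with
  | zero =>
    intro t hj
    exact Submodule.mem_sup_left (mem_G t (by omega))
  | succ j ih =>
    intro t hj
    by_cases hge : m ≤ (Finset.image t Finset.univ).card
    · exact Submodule.mem_sup_left (mem_G t hge)
    · by_cases heq : (Finset.image t Finset.univ).card = m - 1
      · exact memB hkC hKR hK hm t heq
      · have hcard2 : (Finset.image t Finset.univ).card ≤ m - 2 := by omega
        have hsum : ∑ r ∈ Finset.image t Finset.univ, cnt t r = m + l := sum_cnt_over rfl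
        have hlt : (Finset.image t Finset.univ).card
            < ∑ r ∈ Finset.image t Finset.univ, cnt t r := by omega
        obtain ⟨r, hrS, hr2⟩ := exists_two_of_card_lt_sum hlt
        obtain ⟨p1, p2, hp12, hp1, hp2⟩ := exists_two_positions hr2
        have hcompl : K ≤ (Finset.image t Finset.univ)ᶜ.card := by
          rw [Finset.card_compl]
          simp only [Fintype.card_fin]
          omega
        obtain ⟨T, hTsub, hTcard⟩ := Finset.exists_subset_card_eq hcompl
        obtain ⟨β, hβ⟩ := exists_combo hkC T hTcard (Cᵀ r)
        have hexp : ∀ x, ell C (t p1) x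
            = ∑ i : {y // y ∈ T}, β i * ell C (i : Fin R) x := by
          intro x; rw [hp1]; exact ell_combo hβ x
        rw [ftup_expand t p1 β (fun i => (i : Fin R)) hexp]
        apply Submodule.sum_mem
        intro i _
        apply Submodule.smul_mem
        have hiS : (i : Fin R) ∉ Finset.image t Finset.univ :=
          Finset.mem_compl.1 (hTsub i.2)
        have h2' : 2 ≤ cnt t (t p1) := by rw [hp1]; exact hr2
        apply ih
        rw [image_update_eq h2', Finset.card_insert_of_notMem hiS]
        omega

/-- the symmetrization-evaluation linear map -/
noncomputable def Lmap (K n : ℕ) : ((Fin n → Fin K) → ℝ) →ₗ[ℝ] ((Fin K → ℝ) → ℝ) where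
  toFun v := fun x => ∑ k : Fin n → Fin K, v k * ∏ p, x (k p)
  map_add' u v := by
    funext x
    simp only [Pi.add_apply, add_mul, Finset.sum_add_distrib]
  map_smul' c v := by
    funext x
    simp only [Pi.smul_apply, smul_eq_mul, RingHom.id_apply, Finset.mul_sum, mul_assoc]

lemma Lmap_Sml_col {m l : ℕ} (r : TupleIdx m l R) :
    Lmap K (m + l) (fun k => Sml m l C k r) = ftup C r.1 := by
  classical
  funext x
  show (∑ k : Fin (m + l) → Fin K, Sml m l C k r * ∏ p, x (k p)) = ftup C r.1 x
  have step1 : ∀ k : Fin (m + l) → Fin K, Sml m l C k r * ∏ p, x (k p)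
      = (1 / (Nat.factorial (m + l) : ℝ)) *
        ∑ σ : Equiv.Perm (Fin (m + l)), ∏ p, (C (k p) (r.1 (σ p)) * x (k p)) := by
    intro k
    rw [Sml, mul_assoc, Finset.sum_mul]
    congr 1
    refine Finset.sum_congr rfl fun σ _ => ?_
    rw [← Finset.prod_mul_distrib]
  rw [Finset.sum_congr rfl fun k _ => step1 k, ← Finset.mul_sum, Finset.sum_comm]
  have step2 : ∀ σ : Equiv.Perm (Fin (m + l)),
      (∑ k : Fin (m + l) → Fin K, ∏ p, (C (k p) (r.1 (σ p)) * x (k p)))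
        = ftup C r.1 x := by
    intro σ
    rw [← Fintype.prod_sum fun p j => C j (r.1 (σ p)) * x j]
    rw [← congrFun (ftup_comp_equiv r.1 σ) x]
    unfold ftup ell lform
    refine Finset.prod_congr rfl fun p _ => ?_
    exact Finset.sum_congr rfl fun j _ => mul_comm _ _
  rw [Finset.sum_congr rfl fun σ _ => step2 σ, Finset.sum_const, Finset.card_univ]
  rw [Fintype.card_perm, Fintype.card_fin, nsmul_eq_mul, ← mul_assoc, one_div,
    inv_mul_cancel₀ (Nat.cast_ne_zero.2 (Nat.factorial_ne_zero (m + l))), one_mul]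

lemma finrank_G_le_rank {m l : ℕ} :
    Module.finrank ℝ (Gspan C m l) ≤ (Sml m l C).rank := by
  classical
  rw [Matrix.rank]
  have hsub : Gspan C m l
      ≤ Submodule.map (Lmap K (m + l)) (LinearMap.range (Sml m l C).mulVecLin) := by
    rw [Gspan, Submodule.span_le]
    rintro v ⟨r, rfl⟩
    refine ⟨(Sml m l C).mulVec (Pi.single r 1), ⟨Pi.single r 1, rfl⟩, ?_⟩
    have hcol : (Sml m l C).mulVec (Pi.single r 1) = fun k => Sml m l C k r := by
      rw [Matrix.mulVec_single]
      funext k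
      simp
    rw [hcol, Lmap_Sml_col]
  exact (Submodule.finrank_mono hsub).trans (Submodule.finrank_map_le _ _)

/-- monomial function on `ℝ^K` -/
noncomputable def monFun (d : Fin K →₀ ℕ) : (Fin K → ℝ) → ℝ := fun x => ∏ i, x i ^ d i

lemma monFun_li (n : ℕ) : LinearIndependent ℝ
    (fun d : {d : Fin K →₀ ℕ // (d.sum fun _ e => e) = n} => monFun d.1) := by
  classical
  rw [linearIndependent_iff']
  intro s c hsum d hd
  have hp : ∀ x : Fin K → ℝ,
      MvPolynomial.eval x (∑ e ∈ s, (MvPolynomial.monomial e.1) (c e)) = 0 := by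
    intro x
    rw [map_sum]
    have h0 := congrFun hsum x
    rw [Finset.sum_apply, Pi.zero_apply] at h0
    rw [← h0]
    refine Finset.sum_congr rfl fun e _ => ?_
    rw [MvPolynomial.eval_monomial, Finsupp.prod_pow]
    rfl
  have hzero : (∑ e ∈ s, (MvPolynomial.monomial e.1) (c e)) = 0 := by
    apply MvPolynomial.funext
    intro x
    rw [hp x, map_zero]
  have hc := congrArg (MvPolynomial.coeff d.1) hzero
  rw [MvPolynomial.coeff_zero, MvPolynomial.coeff_sum] at hc
  have hother : ∀ e ∈ s, e ≠ d → MvPolynomial.coeff d.1 ((MvPolynomial.monomial e.1) (c e)) = 0 := by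
    intro e _ hne
    rw [MvPolynomial.coeff_monomial, if_neg (fun hh => hne (Subtype.ext hh))]
  rw [Finset.sum_eq_single d hother (fun h => absurd hd h)] at hc
  rw [MvPolynomial.coeff_monomial, if_pos rfl] at hc
  exact hc

noncomputable def Dequiv (n : ℕ) :
    {d : Fin K →₀ ℕ // (d.sum fun _ e => e) = n} ≃ Sym (Fin K) n where
  toFun d := ⟨Finsupp.toMultiset d.1, by rw [Finsupp.card_toMultiset]; exact d.2⟩
  invFun s := ⟨Multiset.toFinsupp s.1, by
    show (Multiset.toFinsupp s.1).sum (fun _ => id) = n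
    rw [Multiset.toFinsupp_sum_eq]
    exact s.2⟩
  left_inv d := Subtype.ext (by simp)
  right_inv s := Subtype.ext (by simp)

lemma exists_tuple_of_D {n : ℕ} (d : Fin K →₀ ℕ) (hd : (d.sum fun _ e => e) = n) :
    ∃ k : Fin n → Fin K, monFun d = fun x => ∏ p, x (k p) := by
  classical
  have hlen : d.toMultiset.toList.length = n := by
    rw [Multiset.length_toList, Finsupp.card_toMultiset]
    exact hd
  refine ⟨fun p => d.toMultiset.toList.get (Fin.cast hlen.symm p), ?_⟩
  funext x
  have h1 : (∏ p : Fin n, x (d.toMultiset.toList.get (Fin.cast hlen.symm p)))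
      = ∏ i : Fin d.toMultiset.toList.length, x (d.toMultiset.toList.get i) :=
    Equiv.prod_comp (finCongr hlen.symm) (fun i => x (d.toMultiset.toList.get i))
  show monFun d x = ∏ p : Fin n, x ((Finsupp.toMultiset d).toList.get (Fin.cast hlen.symm p))
  rw [h1]
  have h2 : (∏ i : Fin (Finsupp.toMultiset d).toList.length,
      x ((Finsupp.toMultiset d).toList.get i)) = ((Finsupp.toMultiset d).toList.map x).prod := by
    rw [← List.ofFn_getElem_eq_map (Finsupp.toMultiset d).toList x, List.prod_ofFn]
    exact Finset.prod_congr rfl fun i _ => by rw [List.get_eq_getElem]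
  have h3 : ((Finsupp.toMultiset d).toList.map x).prod = ((Finsupp.toMultiset d).map x).prod := by
    conv_rhs => rw [← Multiset.coe_toList (Finsupp.toMultiset d)]
    rw [Multiset.map_coe, Multiset.prod_coe]
  have h4 : ((Finsupp.toMultiset d).map x).prod = ∏ i, x i ^ d i := by
    rw [Finsupp.toMultiset_map, Finsupp.prod_toMultiset,
      Finsupp.prod_mapDomain_index (fun b => pow_zero b) (fun b m1 m2 => pow_add b m1 m2),
      Finsupp.prod_pow]
  rw [h2, h3, h4]
  rfl


lemma monFun_mem {m l : ℕ} (hkC : kRank C = K) (hKR : K ≤ R) (hK : 1 ≤ K)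
    (hm : m = R - K + 2) (d : Fin K →₀ ℕ) (hd : (d.sum fun _ e => e) = m + l) :
    monFun d ∈ Gspan C m l ⊔ Xspan C m l := by
  classical
  obtain ⟨k, hk⟩ := exists_tuple_of_D d hd
  obtain ⟨T, hTsub, hTcard⟩ := Finset.exists_subset_card_eq
    (show K ≤ (Finset.univ : Finset (Fin R)).card by
      rw [Finset.card_univ, Fintype.card_fin]; exact hKR)
  choose β hβ using fun j : Fin K => exists_combo hkC T hTcard (Pi.single j 1)
  have hxj : ∀ (j : Fin K) (x : Fin K → ℝ),
      x j = ∑ i : {y // y ∈ T}, β j i * ell C (i : Fin R) x := by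
    intro j x
    have h1 : x j = lform (Pi.single j 1) x := by
      rw [lform]
      rw [Finset.sum_eq_single j (fun b _ hb => by
        rw [Pi.single_apply, if_neg hb, mul_zero])
        (fun h => absurd (Finset.mem_univ j) h)]
      rw [Pi.single_apply, if_pos rfl, mul_one]
    rw [h1]
    exact ell_combo (hβ j) x
  have hexp : monFun d = ∑ u : Fin (m + l) → {y // y ∈ T},
      (∏ p, β (k p) (u p)) • ftup C (fun p => ((u p : Fin R))) := by
    rw [hk]
    funext x
    rw [Finset.sum_apply]
    rw [Finset.prod_congr rfl fun p (_ : p ∈ Finset.univ) => hxj (k p) x]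
    rw [Fintype.prod_sum (fun p i => β (k p) i * ell C (i : Fin R) x)]
    refine Finset.sum_congr rfl fun u _ => ?_
    rw [Pi.smul_apply, smul_eq_mul, ftup, ← Finset.prod_mul_distrib]
  rw [hexp]
  apply Submodule.sum_mem
  intro u _
  exact Submodule.smul_mem _ _ (memGX_all hkC hKR hK hm _)

end Aux

/-- lower bound on the rank of `S_{m+l}(C)`. -/
theorem rank_Sml_lower_bound {K R : ℕ} (C : Matrix (Fin K) (Fin R) ℝ)
    (hKR : K ≤ R) (hkC : kRank C = K)
    (m : ℕ) (hm : m = R - K + 2) (l : ℕ) :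
    Nat.choose (R + l + 1) (m + l) - Nat.choose R (m - 1) ≤ (Sml m l C).rank := by
  classical
  rcases Nat.eq_zero_or_pos K with hK0 | hK
  · subst hK0
    rw [Nat.choose_eq_zero_of_lt (by omega)]
    simp
  · letI : Fintype {d : Fin K →₀ ℕ // (d.sum fun _ e => e) = m + l} :=
      Fintype.ofEquiv _ (Dequiv (K := K) (m + l)).symm
    set Ms := Submodule.span ℝ (Set.range
      (fun d : {d : Fin K →₀ ℕ // (d.sum fun _ e => e) = m + l} => monFun d.1)) with hMdef
    haveI : FiniteDimensional ℝ (Gspan C m l) :=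
      FiniteDimensional.span_of_finite ℝ (Set.finite_range _)
    haveI : FiniteDimensional ℝ (Xspan C m l) :=
      FiniteDimensional.span_of_finite ℝ (Set.finite_range _)
    have hMle : Ms ≤ Gspan C m l ⊔ Xspan C m l := by
      rw [hMdef, Submodule.span_le]
      rintro v ⟨d, rfl⟩
      exact monFun_mem hkC hKR hK hm d.1 d.2
    have hMrank : Module.finrank ℝ Ms = (K + (m + l) - 1).choose (m + l) := by
      rw [hMdef, finrank_span_eq_card (monFun_li (m + l))]
      rw [Fintype.card_congr (Dequiv (K := K) (m + l)), Sym.card_sym_eq_choose,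
        Fintype.card_fin]
    have h1 : Module.finrank ℝ Ms ≤ Module.finrank ℝ ↥(Gspan C m l ⊔ Xspan C m l) :=
      Submodule.finrank_mono hMle
    have h2 : Module.finrank ℝ ↥(Gspan C m l ⊔ Xspan C m l)
        ≤ Module.finrank ℝ (Gspan C m l) + Module.finrank ℝ (Xspan C m l) :=
      Submodule.finrank_add_le_finrank_add_finrank _ _
    have h3 : Module.finrank ℝ (Xspan C m l) ≤ Nat.choose R (m - 1) := by
      have hx := finrank_range_le_card
        (fun S : {S : Finset (Fin R) // S.card = m - 1} => xvec C m l S.1) (R := ℝ)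
      rw [Fintype.card_finset_len, Fintype.card_fin] at hx
      exact hx
    have h4 : Module.finrank ℝ (Gspan C m l) ≤ (Sml m l C).rank :=
      finrank_G_le_rank
    have hch : (K + (m + l) - 1).choose (m + l) = (R + l + 1).choose (m + l) := by
      congr 1
      omega
    omega

end CPD
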